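/- Let L be a finite modular lattice with a diamond coloring c by a set I, and let s, t ∈ L. Then any two shortest paths from s to t in the cover graph of L have, for each color i ∈ I, the same number of edges of color i. -/

import Mathlib

/-- A diamond coloring of (the cover edges of) a lattice. -/
def IsDiamondColoring {L I : Type*} [Lattice L] (c : L → L → I) : Prop :=
  ∀ v s t u : L, v ⋖ s → v ⋖ t → s ⋖ u → t ⋖ u → s ≠ t →
    c v s = c t u ∧ c v t = c s u
set_option linter.unusedSectionVars false

section HeightBasics
variable {L : Type*} [Lattice L] [Fintype L]

noncomputable def HH (x : L) : ℕ := (Order.height x).toNat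

lemma height_ne_top (x : L) : Order.height x ≠ ⊤ := by
  have : Order.height x ≤ (Fintype.card L : ℕ∞) := by
    apply Order.height_le
    intro p _
    exact_mod_cast (p.length_lt_card).le
  intro h
  rw [h] at this
  exact (by simp : ¬ ((⊤:ℕ∞) ≤ (Fintype.card L : ℕ∞))) this

lemma HH_cast (x : L) : (HH x : ℕ∞) = Order.height x := ENat.coe_toNat (height_ne_top x)

lemma HH_lt {x y : L} (h : x < y) : HH x < HH y := by
  have := Order.height_strictMono h (lt_top_iff_ne_top.2 (height_ne_top x))
  rw [← HH_cast, ← HH_cast] at this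
  exact_mod_cast this

lemma HH_le {x y : L} (h : x ≤ y) : HH x ≤ HH y := by
  rcases eq_or_lt_of_le h with rfl | h
  · exact le_rfl
  · exact (HH_lt h).le

lemma eq_of_le_of_HH_le {x y : L} (h : x ≤ y) (h2 : HH y ≤ HH x) : x = y := by
  rcases eq_or_lt_of_le h with rfl | h
  · rfl
  · exact absurd (HH_lt h) (by omega)

lemma covBy_of_gap {x y : L} (h : x < y) (h2 : HH y = HH x + 1) : x ⋖ y := by
  refine ⟨h, fun z hz hz2 => ?_⟩
  have := HH_lt hz; have := HH_lt hz2; omega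

lemma exists_cover_between {x y : L} (h : x < y) : ∃ z, x ⋖ z ∧ z ≤ y := by
  classical
  have hS : ({z : L | x < z ∧ z ≤ y}).Finite := Set.toFinite _
  obtain ⟨m, hm, hmin⟩ := hS.toFinset.exists_minimal
    ⟨y, by rw [Set.Finite.mem_toFinset]; exact ⟨h, le_rfl⟩⟩
  rw [Set.Finite.mem_toFinset] at hm
  refine ⟨m, ⟨hm.1, fun w hw hw2 => ?_⟩, hm.2⟩
  exact hw2.not_ge (hmin ((Set.Finite.mem_toFinset hS).2 ⟨hw, hw2.le.trans hm.2⟩) hw2.le)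

end HeightBasics

section Modular
variable {L : Type*} [Lattice L] [IsModularLattice L] [Fintype L]

/-- Two distinct covers below `a` have sup `a`. -/
lemma sup_eq_of_covBy_covBy {b c a : L} (hb : b ⋖ a) (hc : c ⋖ a) (hne : b ≠ c) :
    b ⊔ c = a := by
  rcases hb.wcovBy.eq_or_eq le_sup_left (sup_le hb.le hc.le) with h | h
  · exfalso
    have hcb : c ≤ b := le_sup_right.trans h.le
    rcases eq_or_lt_of_le hcb with h2 | h2
    · exact hne h2.symm
    · exact hc.2 h2 hb.lt
  · exact h

/-- Two distinct covers below `a` : their inf covers each. -/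
lemma inf_covBy_pair {b c a : L} (hb : b ⋖ a) (hc : c ⋖ a) (hne : b ≠ c) :
    b ⊓ c ⋖ b ∧ b ⊓ c ⋖ c := by
  have hs := sup_eq_of_covBy_covBy hb hc hne
  constructor
  · exact inf_covBy_of_covBy_sup_right (by rw [hs]; exact hc)
  · exact inf_covBy_of_covBy_sup_left (by rw [hs]; exact hb)

/-- Two distinct elements covering `a` : their inf is `a`, and each is covered by the sup. -/
lemma covBy_sup_pair {a b c : L} (hb : a ⋖ b) (hc : a ⋖ c) (hne : b ≠ c) :
    b ⊓ c = a ∧ b ⋖ b ⊔ c ∧ c ⋖ b ⊔ c := by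
  have hinf : b ⊓ c = a := by
    rcases hb.wcovBy.eq_or_eq (le_inf hb.le hc.le) inf_le_left with h | h
    · exact h
    · exfalso
      have hbc : b ≤ c := h.symm.le.trans inf_le_right
      rcases eq_or_lt_of_le hbc with h2 | h2
      · exact hne h2
      · exact hc.2 hb.lt h2
  refine ⟨hinf, ?_, ?_⟩
  · exact covBy_sup_of_inf_covBy_right (by rw [hinf]; exact hc)
  · exact covBy_sup_of_inf_covBy_left (by rw [hinf]; exact hb)


lemma grading_aux : ∀ N : ℕ, ∀ y x : L, HH y ≤ N → x ⋖ y → HH y = HH x + 1 := by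
  intro N
  induction N with
  | zero => intro y x hy hxy; have := HH_lt hxy.lt; omega
  | succ N ih =>
    intro y x hy hxy
    have hxlt : HH x < HH y := HH_lt hxy.lt
    rcases Nat.lt_or_ge (HH y) (N+1) with h | h
    · exact ih y x (by omega) hxy
    have hyN : HH y = N + 1 := by omega
    have hh : Order.height y = (N : ℕ∞) + 1 := by
      rw [← HH_cast, hyN]; push_cast; rfl
    rw [Order.height_eq_coe_add_one_iff] at hh
    obtain ⟨-, ⟨z, hzy, hz⟩, hall⟩ := hh
    have hzN : HH z = N := by
      have := HH_cast z; rw [hz] at this; exact_mod_cast this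
    have hzcov : z ⋖ y := by
      refine ⟨hzy, fun w hw hw2 => ?_⟩
      have h1 : HH z < HH w := HH_lt hw
      have h2 : Order.height w ≤ (N : ℕ∞) := hall w hw2
      have h3 : HH w ≤ N := by
        rw [← HH_cast] at h2; exact_mod_cast h2
      omega
    have hxN : HH x ≤ N := by
      have h2 := hall x hxy.lt
      rw [← HH_cast] at h2
      exact_mod_cast h2
    by_cases hzx : z = x
    · subst hzx; omega
    · have hpair := inf_covBy_pair hxy hzcov (fun h => hzx h.symm)
      have e1 : HH z = HH (x ⊓ z) + 1 := ih z (x ⊓ z) (by omega) hpair.2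
      have e2 : HH x = HH (x ⊓ z) + 1 := ih x (x ⊓ z) (by omega) hpair.1
      omega

lemma HH_covBy {x y : L} (h : x ⋖ y) : HH y = HH x + 1 :=
  grading_aux (HH y) y x le_rfl h

lemma val_aux : ∀ k : ℕ, ∀ x y : L, HH y = HH (x ⊓ y) + k →
    HH x + HH y = HH (x ⊔ y) + HH (x ⊓ y) := by
  intro k
  induction k with
  | zero =>
    intro x y hk
    have h1 : x ⊓ y = y := eq_of_le_of_HH_le inf_le_right (by omega)
    have h2 : y ≤ x := by rw [← h1]; exact inf_le_left
    rw [sup_eq_left.2 h2, h1]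
  | succ k ih =>
    intro x y hk
    have hlt : x ⊓ y < y := by
      rcases eq_or_lt_of_le (inf_le_right : x ⊓ y ≤ y) with h | h
      · rw [h] at hk; omega
      · exact h
    obtain ⟨z, hz, hzy⟩ := exists_cover_between hlt
    have hxz : z ⊓ x = x ⊓ y := le_antisymm
      (le_inf inf_le_right (inf_le_left.trans hzy)) (le_inf hz.le inf_le_left)
    have hcov : x ⋖ z ⊔ x := covBy_sup_of_inf_covBy_left (by rw [hxz]; exact hz)
    have h1 : (z ⊔ x) ⊓ y = z := by
      rw [sup_inf_assoc_of_le x hzy, sup_eq_left.2 hz.le]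
    have h2 : (z ⊔ x) ⊔ y = x ⊔ y := by
      rw [sup_comm z x, sup_assoc, sup_eq_right.2 hzy]
    have hzH : HH z = HH (x ⊓ y) + 1 := HH_covBy hz
    have hco : HH (z ⊔ x) = HH x + 1 := HH_covBy hcov
    have := ih (z ⊔ x) y (by rw [h1]; omega)
    rw [h1, h2] at this
    omega

lemma HH_val (x y : L) : HH x + HH y = HH (x ⊔ y) + HH (x ⊓ y) :=
  val_aux (HH y - HH (x ⊓ y)) x y
    (by have := HH_le (inf_le_right : x ⊓ y ≤ y); omega)

noncomputable def DD (x y : L) : ℕ := 2 * HH (x ⊔ y) - (HH x + HH y)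

lemma DD_add (x y : L) : DD x y + (HH x + HH y) = 2 * HH (x ⊔ y) := by
  have h1 := HH_le (le_sup_left : x ≤ x ⊔ y)
  have h2 := HH_le (le_sup_right : y ≤ x ⊔ y)
  unfold DD; omega

lemma DD_self (x : L) : DD x x = 0 := by
  have := DD_add x x; rw [sup_idem] at this; omega

lemma Hsup_step {x y : L} (t : L) (h : x ⋖ y) : HH (y ⊔ t) ≤ HH (x ⊔ t) + 1 := by
  have hv := HH_val y (x ⊔ t)
  have h1 : y ⊔ (x ⊔ t) = y ⊔ t := by
    rw [← sup_assoc, sup_eq_left.2 h.le]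
  have h2 : HH x ≤ HH (y ⊓ (x ⊔ t)) := HH_le (le_inf h.le le_sup_left)
  have h3 : HH y = HH x + 1 := HH_covBy h
  rw [h1] at hv
  omega

lemma DD_step {x y t : L} (h : x ⋖ y ∨ y ⋖ x) : DD x t ≤ DD y t + 1 := by
  have d1 := DD_add x t
  have d2 := DD_add y t
  rcases h with h | h
  · have h3 : HH y = HH x + 1 := HH_covBy h
    have h4 : HH (x ⊔ t) ≤ HH (y ⊔ t) := HH_le (sup_le_sup_right h.le t)
    omega
  · have h3 : HH x = HH y + 1 := HH_covBy h
    have h4 := Hsup_step t h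
    omega

lemma pathDD : ∀ n : ℕ, ∀ p : ℕ → L, (∀ j < n, p j ⋖ p (j+1) ∨ p (j+1) ⋖ p j) →
    DD (p 0) (p n) ≤ n := by
  intro n
  induction n with
  | zero => intro p _; rw [DD_self]
  | succ n ih =>
    intro p hadj
    have h1 : DD (p 1) (p (n+1)) ≤ n := by
      simpa using ih (fun j => p (j+1)) (fun j hj => hadj (j+1) (by omega))
    have h2 : DD (p 0) (p (n+1)) ≤ DD (p 1) (p (n+1)) + 1 :=
      DD_step (hadj 0 (by omega))
    omega

lemma upchain : ∀ k : ℕ, ∀ x y : L, x ≤ y → HH y = HH x + k →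
    ∃ r : ℕ → L, r 0 = x ∧ r k = y ∧ ∀ j < k, r j ⋖ r (j+1) := by
  intro k
  induction k with
  | zero =>
    intro x y hxy hk
    exact ⟨fun _ => x, rfl, (eq_of_le_of_HH_le hxy (by omega)).symm ▸ rfl, by omega⟩
  | succ k ih =>
    intro x y hxy hk
    have hlt : x < y := lt_of_le_of_ne hxy (by rintro rfl; omega)
    obtain ⟨z, hz, hzy⟩ := exists_cover_between hlt
    have hzH : HH z = HH x + 1 := HH_covBy hz
    obtain ⟨r, hr0, hrk, hradj⟩ := ih z y hzy (by omega)
    refine ⟨fun j => if j = 0 then x else r (j - 1), by simp, by simp [hrk], ?_⟩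
    intro j hj
    rcases Nat.eq_zero_or_pos j with rfl | hjpos
    · simpa [hr0] using hz
    · have h1 : ¬ (j = 0) := by omega
      have h2 : ¬ (j + 1 = 0) := by omega
      simp only [h1, h2, if_false]
      have : j - 1 + 1 = j + 1 - 1 := by omega
      rw [← this]
      exact hradj (j-1) (by omega)

lemma exists_geodesic (s t : L) : ∃ r : ℕ → L, r 0 = s ∧ r (DD s t) = t ∧
    ∀ j < DD s t, r j ⋖ r (j+1) ∨ r (j+1) ⋖ r j := by
  obtain ⟨r1, h10, h1k, h1adj⟩ := upchain (HH (s ⊔ t) - HH s) s (s ⊔ t) le_sup_left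
    (by have := HH_le (le_sup_left : s ≤ s ⊔ t); omega)
  obtain ⟨r2, h20, h2k, h2adj⟩ := upchain (HH (s ⊔ t) - HH t) t (s ⊔ t) le_sup_right
    (by have := HH_le (le_sup_right : t ≤ s ⊔ t); omega)
  set k1 := HH (s ⊔ t) - HH s with hk1
  set k2 := HH (s ⊔ t) - HH t with hk2
  have hD : DD s t = k1 + k2 := by
    have := DD_add s t
    have := HH_le (le_sup_left : s ≤ s ⊔ t)
    have := HH_le (le_sup_right : t ≤ s ⊔ t)
    omega
  refine ⟨fun j => if j < k1 then r1 j else r2 (k2 - (j - k1)), ?_, ?_, ?_⟩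
  · rcases Nat.eq_zero_or_pos k1 with h | h
    · have hst : HH (s ⊔ t) ≤ HH s := by omega
      have : s ⊔ t = s := (eq_of_le_of_HH_le le_sup_left hst).symm
      simp only [h, Nat.lt_irrefl, if_false]
      simpa [h2k, this]
    · simp [h, h10]
  · rw [hD]
    have h1 : ¬ (k1 + k2 < k1) := by omega
    simp only [h1, if_false]
    have : k2 - (k1 + k2 - k1) = 0 := by omega
    rw [this, h20]
  · rw [hD]
    intro j hj
    by_cases hj1 : j + 1 < k1
    · have hj0 : j < k1 := by omega
      simp only [hj0, hj1, if_true]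
      exact Or.inl (h1adj j (by omega))
    · by_cases hj0 : j < k1
      · -- j + 1 = k1
        have hje : j + 1 = k1 := by omega
        simp only [hj0, hj1, if_true, if_false]
        have e1 : k2 - (j + 1 - k1) = k2 := by omega
        rw [e1, h2k, ← h1k, ← hje]
        exact Or.inl (h1adj j (by omega))
      · simp only [hj0, hj1, if_false]
        have hi : j - k1 < k2 := by omega
        have e1 : k2 - (j + 1 - k1) = k2 - (j - k1) - 1 := by omega
        rw [e1]
        have := h2adj (k2 - (j - k1) - 1) (by omega)
        have e2 : k2 - (j - k1) - 1 + 1 = k2 - (j - k1) := by omega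
        rw [e2] at this
        exact Or.inr this


lemma caseUU {s t a b : L} {n : ℕ} (hsa : s ⋖ a) (hsb : s ⋖ b) (hne : a ≠ b)
    (hD : DD s t = n + 2) (hDa : DD a t = n + 1) (hDb : DD b t = n + 1) :
    a ⋖ a ⊔ b ∧ b ⋖ a ⊔ b ∧ DD (a ⊔ b) t = n := by
  obtain ⟨hinf, hax, hbx⟩ := covBy_sup_pair hsa hsb hne
  have ha : HH a = HH s + 1 := HH_covBy hsa
  have hb : HH b = HH s + 1 := HH_covBy hsb
  have hu : HH (a ⊔ b) = HH s + 2 := by have := HH_covBy hax; omega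
  have ds := DD_add s t; have da := DD_add a t; have db := DD_add b t
  have dst : HH (a ⊔ t) = HH (s ⊔ t) := by omega
  have dbt : HH (b ⊔ t) = HH (s ⊔ t) := by omega
  have hat : a ⊔ t = s ⊔ t :=
    (eq_of_le_of_HH_le (sup_le_sup_right hsa.le t) (by omega)).symm
  have hbt : b ⊔ t = s ⊔ t :=
    (eq_of_le_of_HH_le (sup_le_sup_right hsb.le t) (by omega)).symm
  have hut : (a ⊔ b) ⊔ t = s ⊔ t := by
    rw [show (a ⊔ b) ⊔ t = (a ⊔ t) ⊔ (b ⊔ t) by rw [sup_sup_sup_comm, sup_idem],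
      hat, hbt, sup_idem]
  have du := DD_add (a ⊔ b) t
  rw [hut] at du
  exact ⟨hax, hbx, by omega⟩

lemma caseDD {s t a b : L} {n : ℕ} (has : a ⋖ s) (hbs : b ⋖ s) (hne : a ≠ b)
    (hD : DD s t = n + 2) (hDa : DD a t = n + 1) (hDb : DD b t = n + 1) :
    a ⊓ b ⋖ a ∧ a ⊓ b ⋖ b ∧ DD (a ⊓ b) t = n := by
  have hsup : a ⊔ b = s := sup_eq_of_covBy_covBy has hbs hne
  obtain ⟨hua, hub⟩ := inf_covBy_pair has hbs hne
  have ha : HH s = HH a + 1 := HH_covBy has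
  have hb : HH s = HH b + 1 := HH_covBy hbs
  have hu : HH a = HH (a ⊓ b) + 1 := HH_covBy hua
  have ds := DD_add s t; have da := DD_add a t; have db := DD_add b t
  have hat : HH (a ⊔ t) + 1 = HH (s ⊔ t) := by omega
  have hbt : HH (b ⊔ t) + 1 = HH (s ⊔ t) := by omega
  have hstep := Hsup_step t hua
  have hmono : HH ((a ⊓ b) ⊔ t) ≤ HH (a ⊔ t) := HH_le (sup_le_sup_right inf_le_left t)
  have hult : HH ((a ⊓ b) ⊔ t) + 1 = HH (a ⊔ t) := by
    rcases Nat.lt_or_ge (HH ((a ⊓ b) ⊔ t)) (HH (a ⊔ t)) with h | h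
    · omega
    · exfalso
      have e1 : (a ⊓ b) ⊔ t = a ⊔ t :=
        eq_of_le_of_HH_le (sup_le_sup_right inf_le_left t) h
      have h2 : HH ((a ⊓ b) ⊔ t) = HH (b ⊔ t) := by omega
      have e2 : (a ⊓ b) ⊔ t = b ⊔ t :=
        eq_of_le_of_HH_le (sup_le_sup_right inf_le_right t) (by omega)
      have e3 : s ⊔ t = a ⊔ t := by
        rw [← hsup, show (a ⊔ b) ⊔ t = (a ⊔ t) ⊔ (b ⊔ t) by
          rw [sup_sup_sup_comm, sup_idem], ← e1, ← e2, sup_idem, e1]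
      have := congrArg HH e3
      omega
  have du := DD_add (a ⊓ b) t
  exact ⟨hua, hub, by omega⟩

lemma caseUD {s t a b : L} {n : ℕ} (hsa : s ⋖ a) (hbs : b ⋖ s)
    (hD : DD s t = n + 2) (hDa : DD a t = n + 1) (hDb : DD b t = n + 1) :
    ∃ x : L, b ⋖ x ∧ x ⋖ a ∧ s ≠ x ∧ DD x t = n := by
  have ha : HH a = HH s + 1 := HH_covBy hsa
  have hb : HH s = HH b + 1 := HH_covBy hbs
  have ds := DD_add s t; have da := DD_add a t; have db := DD_add b t
  have hat : a ⊔ t = s ⊔ t :=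
    (eq_of_le_of_HH_le (sup_le_sup_right hsa.le t) (by omega)).symm
  have hbt : HH (b ⊔ t) + 1 = HH (s ⊔ t) := by omega
  have hsbt : s ⊔ (b ⊔ t) = s ⊔ t := by
    rw [← sup_assoc, sup_eq_left.2 hbs.le]
  have habt : a ⊔ (b ⊔ t) = s ⊔ t := by
    rw [← sup_assoc, sup_eq_left.2 (hbs.le.trans hsa.le), hat]
  have hw : s ⊓ (b ⊔ t) = b := by
    have hv := HH_val s (b ⊔ t)
    rw [hsbt] at hv
    exact (eq_of_le_of_HH_le (le_inf hbs.le le_sup_left) (by omega)).symm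
  have hvx : HH (a ⊓ (b ⊔ t)) = HH s := by
    have hv := HH_val a (b ⊔ t)
    rw [habt] at hv
    omega
  have hxs : s ≠ a ⊓ (b ⊔ t) := by
    intro h
    have h2 : s ≤ b ⊔ t := h ▸ inf_le_right
    have h3 : s ⊓ (b ⊔ t) = s := inf_eq_left.2 h2
    rw [hw] at h3
    exact hbs.lt.ne h3
  have hxa : a ⊓ (b ⊔ t) ⋖ a := by
    refine covBy_of_gap (lt_of_le_of_ne inf_le_left ?_) (by omega)
    intro h
    rw [h] at hvx
    omega
  have hsx : s ⊔ (a ⊓ (b ⊔ t)) = a := by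
    rcases hsa.wcovBy.eq_or_eq le_sup_left (sup_le hsa.le inf_le_left) with h | h
    · exfalso
      exact hxs (eq_of_le_of_HH_le (le_sup_right.trans h.le) (by omega)).symm
    · exact h
  have hbx : b ⋖ a ⊓ (b ⊔ t) := by
    have h1 : s ⊓ (a ⊓ (b ⊔ t)) ⋖ a ⊓ (b ⊔ t) :=
      inf_covBy_of_covBy_sup_left (by rw [hsx]; exact hsa)
    have h2 : s ⊓ (a ⊓ (b ⊔ t)) ⋖ s := inf_covBy_of_covBy_sup_right (by rw [hsx]; exact hxa)
    have h3 : HH (s ⊓ (a ⊓ (b ⊔ t))) + 1 = HH s := by have := HH_covBy h2; omega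
    have h4 : b ≤ s ⊓ (a ⊓ (b ⊔ t)) :=
      le_inf hbs.le (le_inf (hbs.le.trans hsa.le) le_sup_left)
    have h5 : b = s ⊓ (a ⊓ (b ⊔ t)) := eq_of_le_of_HH_le h4 (by omega)
    nth_rewrite 1 [h5]
    exact h1
  have hxt : (a ⊓ (b ⊔ t)) ⊔ t = b ⊔ t := by
    apply le_antisymm
    · exact sup_le inf_le_right le_sup_right
    · exact sup_le_sup_right hbx.le t
  have dx := DD_add (a ⊓ (b ⊔ t)) t
  rw [hxt] at dx
  exact ⟨a ⊓ (b ⊔ t), hbx, hxa, hxs, by omega⟩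

section Counting
variable {I : Type*}

def Adj (p : ℕ → L) (k : ℕ) : Prop := ∀ j < k, p j ⋖ p (j+1) ∨ p (j+1) ⋖ p j

lemma tail_adj {p : ℕ → L} {k : ℕ} (h : Adj p (k+1)) : Adj (fun j => p (j+1)) k :=
  fun j hj => h (j+1) (by omega)

open Classical in
noncomputable def ecnt (c : L → L → I) (i : I) (x y : L) : ℕ :=
  if (x ⋖ y ∧ c x y = i) ∨ (y ⋖ x ∧ c y x = i) then 1 else 0

noncomputable def cnt (c : L → L → I) (i : I) (n : ℕ) (p : ℕ → L) : ℕ :=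
  ∑ j ∈ Finset.range n, ecnt c i (p j) (p (j+1))

open Classical in
lemma ecnt_up {c : L → L → I} {i : I} {x y : L} (h : x ⋖ y) :
    ecnt c i x y = if c x y = i then 1 else 0 := by
  have h2 : ¬ (y ⋖ x) := fun h' => lt_asymm h.lt h'.lt
  simp [ecnt, h, h2]

open Classical in
lemma ecnt_down {c : L → L → I} {i : I} {x y : L} (h : y ⋖ x) :
    ecnt c i x y = if c y x = i then 1 else 0 := by
  have h2 : ¬ (x ⋖ y) := fun h' => lt_asymm h.lt h'.lt
  simp [ecnt, h, h2]

lemma cnt_succ' (c : L → L → I) (i : I) (n : ℕ) (p : ℕ → L) :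
    cnt c i (n+1) p = ecnt c i (p 0) (p 1) + cnt c i n (fun j => p (j+1)) := by
  unfold cnt
  rw [Finset.sum_range_succ' (fun j => ecnt c i (p j) (p (j+1))) n]
  ring

lemma cnt_congr {c : L → L → I} {i : I} {n : ℕ} {p q : ℕ → L}
    (h : ∀ j ≤ n, p j = q j) : cnt c i n p = cnt c i n q := by
  unfold cnt
  refine Finset.sum_congr rfl fun j hj => ?_
  rw [Finset.mem_range] at hj
  rw [h j (by omega), h (j+1) (by omega)]

lemma ncard_eq_cnt (c : L → L → I) (i : I) (n : ℕ) (p : ℕ → L) :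
    Set.ncard {j : ℕ | j < n ∧
        ((p j ⋖ p (j + 1) ∧ c (p j) (p (j + 1)) = i) ∨
          (p (j + 1) ⋖ p j ∧ c (p (j + 1)) (p j) = i))} = cnt c i n p := by
  classical
  have h1 : {j : ℕ | j < n ∧
        ((p j ⋖ p (j + 1) ∧ c (p j) (p (j + 1)) = i) ∨
          (p (j + 1) ⋖ p j ∧ c (p (j + 1)) (p j) = i))} =
      ↑((Finset.range n).filter (fun j =>
        ((p j ⋖ p (j + 1) ∧ c (p j) (p (j + 1)) = i) ∨
          (p (j + 1) ⋖ p j ∧ c (p (j + 1)) (p j) = i)))) := by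
    ext j
    simp [Finset.mem_filter, Finset.mem_range]
  rw [h1, Set.ncard_coe_finset, Finset.card_filter]
  refine Finset.sum_congr rfl fun j _ => ?_
  unfold ecnt
  congr 1

lemma DD_tail {k : ℕ} {t : L} {p : ℕ → L} (hpn : p (k+1) = t) (hpadj : Adj p (k+1))
    (hD : DD (p 0) t = k+1) : DD (p 1) t = k := by
  have h1 : DD (p 1) t ≤ k := by
    have := pathDD k (fun j => p (j+1)) (tail_adj hpadj)
    rw [hpn] at this
    exact this
  have h2 : DD (p 0) t ≤ DD (p 1) t + 1 := DD_step (hpadj 0 (by omega))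
  omega

lemma bridge (c : L → L → I) (i : I) {k : ℕ}
    (ih : ∀ s' t' : L, ∀ p' q' : ℕ → L, p' 0 = s' → p' (k+1) = t' → Adj p' (k+1) →
       q' 0 = s' → q' (k+1) = t' → Adj q' (k+1) → DD s' t' = k+1 →
       cnt c i (k+1) p' = cnt c i (k+1) q')
    {s t u : L} {p r : ℕ → L}
    (hp0 : p 0 = s) (hpn : p (k+2) = t) (hpadj : Adj p (k+2)) (hD : DD s t = k+2)
    (hau : p 1 ⋖ u ∨ u ⋖ p 1)
    (hr0 : r 0 = u) (hrk : r k = t) (hradj : Adj r k) :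
    cnt c i (k+2) p = ecnt c i s (p 1) + (ecnt c i (p 1) u + cnt c i k r) := by
  set tail2 : ℕ → L := fun j => if j = 0 then p 1 else r (j - 1) with htail2
  have htail20 : tail2 0 = p 1 := rfl
  have htail2succ : ∀ j, tail2 (j+1) = r j := fun j => by simp [htail2]
  have htail2adj : Adj tail2 (k+1) := by
    intro j hj
    rcases Nat.eq_zero_or_pos j with rfl | hjpos
    · rw [htail20, htail2succ, hr0]; exact hau
    · obtain ⟨j', rfl⟩ := Nat.exists_eq_add_of_lt hjpos
      rw [htail2succ, htail2succ]
      exact hradj (0 + j') (by omega)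
  have hDAt : DD (p 1) t = k+1 := DD_tail hpn hpadj (by rw [hp0]; exact hD)
  have ihres : cnt c i (k+1) (fun j => p (j+1)) = cnt c i (k+1) tail2 := by
    refine ih (p 1) t _ _ rfl (by simp [hpn]) (tail_adj hpadj) htail20 ?_ htail2adj hDAt
    rw [htail2succ, hrk]
  have e1 := cnt_succ' c i (k+1) p
  have e2 := cnt_succ' c i k tail2
  have e3 : cnt c i k (fun j => tail2 (j+1)) = cnt c i k r :=
    cnt_congr (fun j _ => htail2succ j)
  rw [e1, hp0, ihres, e2, e3, htail20, htail2succ, hr0]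

lemma glue (c : L → L → I) (i : I) {k : ℕ}
    (ih : ∀ s' t' : L, ∀ p' q' : ℕ → L, p' 0 = s' → p' (k+1) = t' → Adj p' (k+1) →
       q' 0 = s' → q' (k+1) = t' → Adj q' (k+1) → DD s' t' = k+1 →
       cnt c i (k+1) p' = cnt c i (k+1) q')
    {s t u : L} {p q : ℕ → L}
    (hp0 : p 0 = s) (hpn : p (k+2) = t) (hpadj : Adj p (k+2))
    (hq0 : q 0 = s) (hqn : q (k+2) = t) (hqadj : Adj q (k+2))
    (hD : DD s t = k+2)
    (hau : p 1 ⋖ u ∨ u ⋖ p 1) (hbu : q 1 ⋖ u ∨ u ⋖ q 1) (hDu : DD u t = k)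
    (hsum : ecnt c i s (p 1) + ecnt c i (p 1) u = ecnt c i s (q 1) + ecnt c i (q 1) u) :
    cnt c i (k+2) p = cnt c i (k+2) q := by
  obtain ⟨r, hr0, hrk, hradj⟩ := exists_geodesic u t
  rw [hDu] at hrk hradj
  rw [bridge c i ih hp0 hpn hpadj hD hau hr0 hrk hradj,
      bridge c i ih hq0 hqn hqadj hD hbu hr0 hrk hradj]
  omega

lemma key (c : L → L → I) (hc : IsDiamondColoring c) (i : I) :
    ∀ n : ℕ, ∀ s t : L, ∀ p q : ℕ → L, p 0 = s → p n = t → Adj p n →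
      q 0 = s → q n = t → Adj q n → DD s t = n →
      cnt c i n p = cnt c i n q := by
  intro n
  induction n with
  | zero => intro s t p q _ _ _ _ _ _ _; simp [cnt]
  | succ n ih =>
    intro s t p q hp0 hpn hpadj hq0 hqn hqadj hD
    by_cases hab : p 1 = q 1
    · rw [cnt_succ', cnt_succ']
      have h1 : ecnt c i (p 0) (p 1) = ecnt c i (q 0) (q 1) := by rw [hp0, hq0, hab]
      have hDA : DD (p 1) t = n := DD_tail hpn hpadj (by rw [hp0]; exact hD)
      have h2 : cnt c i n (fun j => p (j+1)) = cnt c i n (fun j => q (j+1)) :=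
        ih (p 1) t _ _ rfl hpn (tail_adj hpadj) hab.symm hqn (tail_adj hqadj) hDA
      omega
    · rcases n with _ | k
      · exact absurd (hpn.trans hqn.symm) hab
      · have hDA : DD (p 1) t = k + 1 := DD_tail hpn hpadj (by rw [hp0]; exact hD)
        have hDB : DD (q 1) t = k + 1 := DD_tail hqn hqadj (by rw [hq0]; exact hD)
        have hpe := hpadj 0 (by omega)
        have hqe := hqadj 0 (by omega)
        rw [hp0] at hpe
        rw [hq0] at hqe
        rcases hpe with hpu | hpd <;> rcases hqe with hqu | hqd
        · obtain ⟨hau, hbu, hDu⟩ := caseUU hpu hqu hab hD hDA hDB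
          refine glue c i ih hp0 hpn hpadj hq0 hqn hqadj hD (Or.inl hau) (Or.inl hbu) hDu ?_
          obtain ⟨e1, e2⟩ := hc s (p 1) (q 1) (p 1 ⊔ q 1) hpu hqu hau hbu hab
          rw [ecnt_up hpu, ecnt_up hau, ecnt_up hqu, ecnt_up hbu, e1, e2]
          exact add_comm _ _
        · obtain ⟨x, hbx, hxa, hsx, hDu⟩ := caseUD hpu hqd hD hDA hDB
          refine glue c i ih hp0 hpn hpadj hq0 hqn hqadj hD (Or.inr hxa) (Or.inl hbx) hDu ?_
          obtain ⟨e1, e2⟩ := hc (q 1) s x (p 1) hqd hbx hpu hxa hsx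
          rw [ecnt_up hpu, ecnt_down hxa, ecnt_down hqd, ecnt_up hbx, e1, e2]
          exact add_comm _ _
        · obtain ⟨x, hbx, hxa, hsx, hDu⟩ := caseUD hqu hpd hD hDB hDA
          refine (glue c i ih hq0 hqn hqadj hp0 hpn hpadj hD (Or.inr hxa) (Or.inl hbx)
            hDu ?_).symm
          obtain ⟨e1, e2⟩ := hc (p 1) s x (q 1) hpd hbx hqu hxa hsx
          rw [ecnt_up hqu, ecnt_down hxa, ecnt_down hpd, ecnt_up hbx, e1, e2]
          exact add_comm _ _
        · obtain ⟨hua, hub, hDu⟩ := caseDD hpd hqd hab hD hDA hDB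
          refine glue c i ih hp0 hpn hpadj hq0 hqn hqadj hD (Or.inr hua) (Or.inr hub) hDu ?_
          obtain ⟨e1, e2⟩ := hc (p 1 ⊓ q 1) (p 1) (q 1) s hua hub hpd hqd hab
          rw [ecnt_down hpd, ecnt_down hua, ecnt_down hqd, ecnt_down hub, e1, e2]
          exact add_comm _ _

end Counting
end Modular

theorem stmt_15 {L I : Type*} [Lattice L] [IsModularLattice L] [Fintype L]
    (c : L → L → I) (hc : IsDiamondColoring c)
    (s t : L) (n m : ℕ) (p q : ℕ → L)
    (hp0 : p 0 = s) (hpn : p n = t)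
    (hpadj : ∀ j < n, p j ⋖ p (j + 1) ∨ p (j + 1) ⋖ p j)
    (hq0 : q 0 = s) (hqm : q m = t)
    (hqadj : ∀ j < m, q j ⋖ q (j + 1) ∨ q (j + 1) ⋖ q j)
    (hpshort : ∀ (k : ℕ) (r : ℕ → L), r 0 = s → r k = t →
      (∀ j < k, r j ⋖ r (j + 1) ∨ r (j + 1) ⋖ r j) → n ≤ k)
    (hqshort : ∀ (k : ℕ) (r : ℕ → L), r 0 = s → r k = t →
      (∀ j < k, r j ⋖ r (j + 1) ∨ r (j + 1) ⋖ r j) → m ≤ k)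
    (i : I) :
    Set.ncard {j : ℕ | j < n ∧
        ((p j ⋖ p (j + 1) ∧ c (p j) (p (j + 1)) = i) ∨
          (p (j + 1) ⋖ p j ∧ c (p (j + 1)) (p j) = i))} =
    Set.ncard {j : ℕ | j < m ∧
        ((q j ⋖ q (j + 1) ∧ c (q j) (q (j + 1)) = i) ∨
          (q (j + 1) ⋖ q j ∧ c (q (j + 1)) (q j) = i))} := by
  obtain ⟨r, hr0, hrk, hradj⟩ := exists_geodesic s t
  have hn : n = DD s t := by
    refine le_antisymm (hpshort _ r hr0 hrk hradj) ?_
    have := pathDD n p hpadj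
    rw [hp0, hpn] at this
    exact this
  have hm : m = DD s t := by
    refine le_antisymm (hqshort _ r hr0 hrk hradj) ?_
    have := pathDD m q hqadj
    rw [hq0, hqm] at this
    exact this
  rw [ncard_eq_cnt, ncard_eq_cnt]
  have hmn : m = n := hm.trans hn.symm
  subst hmn
  exact key c hc i m s t p q hp0 hpn hpadj hq0 hqm hqadj hn.symm
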